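/- For every integer k ≥ 3, there exists a pseudo k-metric space that is not a strong pseudo k-metric space; i.e., the family of strong pseudo k-metric spaces is strictly contained in the family of pseudo k-metric spaces. -/

import Mathlib

open scoped BigOperators

/-- An alternating real-valued function on `j`-tuples of `X`
(a `(j-1)`-dimensional chain on the complete complex on `X`). -/
def AltChain {X : Type*} {j : ℕ} (α : (Fin j → X) → ℝ) : Prop :=
  ∀ (π : Equiv.Perm (Fin j)) (x : Fin j → X),
    α (x ∘ π) = ((Equiv.Perm.sign π : ℤ) : ℝ) * α x

/-- The boundary operator: `(∂α)(y₁,…,y_j) = ∑_{x ∈ X} α(x, y₁, …, y_j)`. -/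
noncomputable def bdry {X : Type*} [Fintype X] {j : ℕ}
    (α : (Fin (j + 1) → X) → ℝ) : (Fin j → X) → ℝ :=
  fun y => ∑ x : X, α (Fin.cons x y)

/-- The elementary chain `1_t`: value `sign π` on the reordering of `t` by `π`,
and `0` on all other tuples. -/
noncomputable def unitChain {X : Type*} [DecidableEq X] {j : ℕ} (t : Fin j → X) :
    (Fin j → X) → ℝ :=
  fun s => ∑ π : Equiv.Perm (Fin j),
    if s = t ∘ π then ((Equiv.Perm.sign π : ℤ) : ℝ) else 0

/-- The coboundary operator:
`(δf)(x₁,…,x_{j+2}) = ∑ᵢ (-1)^(i+1) f(x₁,…,x̂ᵢ,…,x_{j+2})` (`0`-indexed sign `(-1)^i`). -/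
noncomputable def cobdry {X : Type*} {j : ℕ}
    (f : (Fin (j + 1) → X) → ℝ) : (Fin (j + 2) → X) → ℝ :=
  fun x => ∑ i : Fin (j + 2), (-1 : ℝ) ^ (i : ℕ) * f (x ∘ i.succAbove)

/-- A pseudo metric of arity `K` (a pseudo `K`-metric): nonnegative, vanishing on
non-injective tuples, permutation invariant, satisfying the simplex inequality. -/
structure IsPseudoMetric {X : Type*} (K : ℕ) (d : (Fin K → X) → ℝ) : Prop where
  nonneg : ∀ x, 0 ≤ d x
  eq_zero : ∀ x, ¬ Function.Injective x → d x = 0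
  perm : ∀ (π : Equiv.Perm (Fin K)) (x), d (x ∘ π) = d x
  simplex : ∀ (x : Fin K → X) (y : X),
    d x ≤ ∑ i : Fin K, d (Function.update x i y)

/-- A strong pseudo metric of arity `k + 1` (a strong pseudo `(k+1)`-metric).
The strong simplex inequality `d t ≤ ∑_τ |α(τ)| * d(τ)` (with the sum over
`(k+1)`-element subsets `τ` of `X`, each evaluated on any fixed ordering of `τ`)
is stated in the equivalent form `(k+1)! * d t ≤ ∑_s |α(s)| * d(s)` with the sum
over all `(k+1)`-tuples `s`: since `α` is alternating and `d` is permutation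
invariant, the summand depends only on the underlying set of `s` (it vanishes on
tuples with repeated entries), and each `(k+1)`-element subset has exactly
`(k+1)!` orderings. -/
structure IsStrongPseudoMetric {X : Type*} [Fintype X] [DecidableEq X] (k : ℕ)
    (d : (Fin (k + 1) → X) → ℝ) : Prop where
  nonneg : ∀ x, 0 ≤ d x
  eq_zero : ∀ x, ¬ Function.Injective x → d x = 0
  perm : ∀ (π : Equiv.Perm (Fin (k + 1))) (x), d (x ∘ π) = d x
  strong_simplex : ∀ t : Fin (k + 1) → X, Function.Injective t →
    ∀ α : (Fin (k + 1) → X) → ℝ, AltChain α → bdry α = bdry (unitChain t) →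
      ((k + 1).factorial : ℝ) * d t ≤ ∑ s : Fin (k + 1) → X, |α s| * d s

/-- `(X, d)` is a coboundary metric of arity `k + 2` in `m` dimensions with respect
to the norm `ν` on `ℝ^m`: there are chains `f 1, …, f m` on `(k+1)`-tuples (i.e.
`(k+2)-2`-dimensional chains for arity `k+2`) whose simultaneous coboundary
realizes `d` on injective tuples, and `d` vanishes on non-injective tuples. -/
def IsCoboundaryMetric {X : Type*} (k m : ℕ) (ν : (Fin m → ℝ) → ℝ)
    (d : (Fin (k + 2) → X) → ℝ) : Prop :=
  ∃ f : Fin m → ((Fin (k + 1) → X) → ℝ),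
    (∀ i, AltChain (f i)) ∧
    (∀ x, Function.Injective x → d x = ν (fun i => cobdry (f i) x)) ∧
    (∀ x, ¬ Function.Injective x → d x = 0)

/-- `ν` is a norm on `ℝ^m`. -/
structure IsNorm {m : ℕ} (ν : (Fin m → ℝ) → ℝ) : Prop where
  nonneg : ∀ x, 0 ≤ ν x
  eq_zero_iff : ∀ x, ν x = 0 ↔ x = 0
  homog : ∀ (c : ℝ) (x), ν (c • x) = |c| * ν x
  triangle : ∀ x y, ν (x + y) ≤ ν x + ν y

/-- The `ℓ_p` norm on `ℝ^m` for real `p`. -/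
noncomputable def lpNorm (p : ℝ) {m : ℕ} (x : Fin m → ℝ) : ℝ :=
  (∑ i, |x i| ^ p) ^ (1 / p)

/-- The `ℓ_1` norm on `ℝ^m`. -/
noncomputable def l1Norm {m : ℕ} (x : Fin m → ℝ) : ℝ := ∑ i, |x i|

/-- The `ℓ_2` (Euclidean) norm on `ℝ^m`. -/
noncomputable def l2Norm {m : ℕ} (x : Fin m → ℝ) : ℝ := Real.sqrt (∑ i, x i ^ 2)

/-- The `ℓ_∞` norm on `ℝ^m` (the sup norm, which is the norm of `Fin m → ℝ`). -/
noncomputable def linfNorm {m : ℕ} (x : Fin m → ℝ) : ℝ := ‖x‖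

/- The apex extension of `d` (of arity `K`), with the apex being
`none : Option X` (a new element not in `X`): on an injective `(K+1)`-tuple
containing the apex in position `i` it is `d` of the tuple with position `i`
removed, and it is `0` on all other tuples. -/
open Classical in
noncomputable def apexExt {X : Type*} {K : ℕ} (d : (Fin K → X) → ℝ) :
    (Fin (K + 1) → Option X) → ℝ := fun x =>
  if h : Function.Injective x ∧ ∃ i, x i = none then
    d (fun j =>
      Option.get (x ((Classical.choose h.2).succAbove j))
        (by
          rw [Option.isSome_iff_ne_none]
          intro hnone
          exact Fin.succAbove_ne (Classical.choose h.2) j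
            (h.1 (hnone.trans (Classical.choose_spec h.2).symm))))
  else 0

/-- The `K`-dimensional volume of the simplex with vertices `y 0, …, y K` in `ℝ^m`:
`(1/K!) * √(det (AᵀA))` where `A` is the `m × K` matrix with columns
`y i - y 0`, `i = 1, …, K`. -/
noncomputable def simplexVolume {m K : ℕ} (y : Fin (K + 1) → (Fin m → ℝ)) : ℝ :=
  (1 / (K.factorial : ℝ)) *
    Real.sqrt
      (Matrix.det
        (Matrix.of fun i j : Fin K =>
          ∑ l : Fin m, (y i.succ l - y 0 l) * (y j.succ l - y 0 l)))

section UC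
variable {X : Type*} [DecidableEq X] {j : ℕ} (t : Fin j → X)

omit [DecidableEq X] in
lemma comp_right_inj (σ : Equiv.Perm (Fin j)) {f g : Fin j → X} :
    f ∘ σ = g ∘ σ ↔ f = g := by
  constructor
  · intro H
    funext i
    have := congrFun H (σ.symm i)
    simpa using this
  · rintro rfl; rfl

lemma altChain_unitChain : AltChain (unitChain t) := by
  intro σ s
  unfold unitChain
  rw [Finset.mul_sum]
  refine Fintype.sum_equiv (Equiv.mulRight σ⁻¹) _ _ fun ρ => ?_
  have h2 : s ∘ σ = t ∘ ρ ↔ s = t ∘ (ρ * σ⁻¹) := by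
    rw [← comp_right_inj σ (f := s), show (t ∘ (ρ * σ⁻¹)) ∘ σ = t ∘ ρ from funext fun i => by
      simp [Equiv.Perm.mul_apply]]
  simp only [Equiv.coe_mulRight]
  split_ifs with h3 h4 h4
  · have hs : Equiv.Perm.sign ρ = Equiv.Perm.sign σ * Equiv.Perm.sign (ρ * σ⁻¹) := by
      rw [Equiv.Perm.sign_mul, Equiv.Perm.sign_inv, mul_comm, mul_assoc, Int.units_mul_self,
        mul_one]
    simp only [h4, eq_self_iff_true, if_true]
    rw [hs]
    push_cast
    ring
  · exact absurd (h2.mp h3) h4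
  · exact absurd (h2.mpr h4) h3
  · simp only [h4, if_false]
    ring

lemma unitChain_comp (ht : Function.Injective t) (π : Equiv.Perm (Fin j)) :
    unitChain t (t ∘ π) = ((Equiv.Perm.sign π : ℤ) : ℝ) := by
  unfold unitChain
  rw [Finset.sum_eq_single π]
  · simp
  · intro ρ _ hρ
    rw [if_neg]
    intro h
    exact hρ (Equiv.ext fun i => ht (congrFun h.symm i))
  · simp

lemma unitChain_eq_zero {s : Fin j → X} (hs : ∀ π : Equiv.Perm (Fin j), s ≠ t ∘ π) :
    unitChain t s = 0 := by
  unfold unitChain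
  exact Finset.sum_eq_zero fun π _ => if_neg (hs π)

end UC

section W
variable {k : ℕ}

abbrev XX (k : ℕ) := Fin ((k+3)*2)

def qq (k : ℕ) : XX k ≃ Fin (k+3) × Fin 2 := finProdFinEquiv.symm

noncomputable def vv (k : ℕ) (c : Fin (k+3)) (x : XX k) : ℝ :=
  (if qq k x = (c, 0) then 1 else 0) - (if qq k x = (c, 1) then 1 else 0)

noncomputable def Wm (k : ℕ) (s : Fin (k+3) → XX k) : Matrix (Fin (k+3)) (Fin (k+3)) ℝ :=
  Matrix.of fun j i => vv k i (s j)

noncomputable def W (k : ℕ) (s : Fin (k+3) → XX k) : ℝ := (Wm k s).det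

def tt (k : ℕ) : Fin (k+3) → XX k := fun i => (qq k).symm (i, 0)

lemma tt_inj : Function.Injective (tt k) := fun a b h => by
  have := (qq k).symm.injective h
  exact (Prod.mk.injEq _ _ _ _).mp this |>.1

lemma vv_eq_zero {c : Fin (k+3)} {x : XX k} (h : (qq k x).1 ≠ c) : vv k c x = 0 := by
  unfold vv
  rw [if_neg, if_neg, sub_zero]
  · intro he; exact h (by rw [he])
  · intro he; exact h (by rw [he])

lemma sum_vv (c : Fin (k+3)) : ∑ x : XX k, vv k c x = 0 := by
  have := Fintype.sum_equiv (qq k) (fun x => vv k c x)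
    (fun p => (if p = (c, 0) then (1:ℝ) else 0) - (if p = (c, 1) then 1 else 0))
    (fun x => rfl)
  rw [this, Finset.sum_sub_distrib]
  rw [Finset.sum_ite_eq' Finset.univ ((c, 0) : Fin (k+3) × Fin 2) (fun _ => (1:ℝ)),
    Finset.sum_ite_eq' Finset.univ ((c, 1) : Fin (k+3) × Fin 2) (fun _ => (1:ℝ))]
  simp

lemma sum_abs_vv (c : Fin (k+3)) : ∑ x : XX k, |vv k c x| = 2 := by
  have key : ∀ x : XX k, |vv k c x| =
      (if qq k x = (c, 0) then 1 else 0) + (if qq k x = (c, 1) then 1 else 0) := by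
    intro x
    unfold vv
    by_cases h0 : qq k x = (c, 0)
    · have h1 : qq k x ≠ (c, 1) := by rw [h0]; simp [Prod.ext_iff, Fin.ext_iff]
      rw [if_pos h0, if_neg h1]; norm_num
    · by_cases h1 : qq k x = (c, 1)
      · rw [if_neg h0, if_pos h1]; norm_num
      · rw [if_neg h0, if_neg h1]; norm_num
  rw [Finset.sum_congr rfl fun x _ => key x]
  have := Fintype.sum_equiv (qq k)
    (fun x => (if qq k x = (c, 0) then (1:ℝ) else 0) + (if qq k x = (c, 1) then 1 else 0))
    (fun p => (if p = (c, 0) then (1:ℝ) else 0) + (if p = (c, 1) then 1 else 0))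
    (fun x => rfl)
  rw [this, Finset.sum_add_distrib,
    Finset.sum_ite_eq' Finset.univ ((c, 0) : Fin (k+3) × Fin 2) (fun _ => (1:ℝ)),
    Finset.sum_ite_eq' Finset.univ ((c, 1) : Fin (k+3) × Fin 2) (fun _ => (1:ℝ))]
  norm_num

lemma W_comp_perm (s : Fin (k+3) → XX k) (σ : Equiv.Perm (Fin (k+3))) :
    W k (s ∘ σ) = ((Equiv.Perm.sign σ : ℤ) : ℝ) * W k s := by
  unfold W
  have : Wm k (s ∘ σ) = (Wm k s).submatrix σ id := rfl
  rw [this, Matrix.det_permute]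

lemma W_tt : W k (tt k) = 1 := by
  unfold W
  have : Wm k (tt k) = 1 := by
    ext j i
    unfold Wm vv tt
    simp only [Matrix.of_apply, Equiv.apply_symm_apply, Matrix.one_apply]
    by_cases h : j = i
    · subst h
      rw [if_pos rfl, if_neg (by simp [Prod.ext_iff, Fin.ext_iff]), if_pos rfl]
      norm_num
    · rw [if_neg (by simp [Prod.ext_iff]; intro hji; exact absurd hji.symm (Ne.symm h)),
        if_neg (by simp [Prod.ext_iff, Fin.ext_iff]), if_neg h]
      norm_num
  rw [this, Matrix.det_one]

lemma W_eq_zero_of_not_inj {s : Fin (k+3) → XX k} (hs : ¬ Function.Injective s) :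
    W k s = 0 := by
  rw [Function.not_injective_iff] at hs
  obtain ⟨a, b, hab, hne⟩ := hs
  exact Matrix.det_zero_of_row_eq hne (by
    ext i
    show vv k i (s a) = vv k i (s b)
    rw [hab])

lemma W_eq_zero_of_not_cls_inj {s : Fin (k+3) → XX k}
    (hs : ¬ Function.Injective fun i => (qq k (s i)).1) : W k s = 0 := by
  have hsurj : ¬ Function.Surjective fun i => (qq k (s i)).1 := by
    intro h
    exact hs (Finite.injective_iff_surjective.mpr h)
  simp only [Function.Surjective, not_forall, not_exists] at hsurj
  obtain ⟨c, hc⟩ := hsurj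
  exact Matrix.det_eq_zero_of_column_eq_zero c fun j => vv_eq_zero (hc j)

lemma bdry_W_zero (y : Fin (k+2) → XX k) : ∑ x : XX k, W k (Fin.cons x y) = 0 := by
  classical
  set N : Matrix (Fin (k+3)) (Fin (k+3)) ℝ := Wm k (Fin.cons (tt k 0) y) with hN
  have key : ∀ x : XX k, Wm k (Fin.cons x y) = N.updateRow 0 (fun i => vv k i x) := by
    intro x
    ext j i
    refine Fin.cases ?_ (fun j' => ?_) j
    · rw [Matrix.updateRow_self]
      rfl
    · rw [Matrix.updateRow_ne (Fin.succ_ne_zero j')]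
      simp only [hN, Wm, Matrix.of_apply, Fin.cons_succ]
  have step1 : ∑ x : XX k, W k (Fin.cons x y)
      = ∑ x : XX k, (Matrix.detRowAlternating (Function.update N 0 (fun i => vv k i x))) := by
    refine Finset.sum_congr rfl fun x _ => ?_
    rw [show W k (Fin.cons x y) = (Wm k (Fin.cons x y)).det from rfl, key x]
    rfl
  rw [step1, ← (Matrix.detRowAlternating).map_update_sum Finset.univ 0 (fun x i => vv k i x) N]
  have : (∑ x : XX k, fun i => vv k i x) = fun i => ∑ x : XX k, vv k i x := by
    ext i
    simp [Finset.sum_apply]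
  rw [this]
  have : (fun i => ∑ x : XX k, vv k i x) = (0 : Fin (k+3) → ℝ) := by
    ext i; exact sum_vv i
  rw [this]
  exact Matrix.det_eq_zero_of_row_eq_zero 0 (fun j => congrFun (Function.update_self (0 : Fin (k+3)) (0 : Fin (k+3) → ℝ)
    (N : Fin (k+3) → Fin (k+3) → ℝ)) j)

end W

section Metric
variable {k : ℕ}

noncomputable def hh (k : ℕ) : ℝ := 2^(k+3)

noncomputable def MM (k : ℕ) : ℝ := 1 + ((k:ℝ)+2) * 2^(k+3)

lemma one_le_hh : (1:ℝ) ≤ hh k := by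
  unfold hh
  exact one_le_pow₀ (by norm_num)

lemma one_le_MM : (1:ℝ) ≤ MM k := by
  unfold MM
  nlinarith [pow_pos (by norm_num : (0:ℝ) < 2) (k+3), (Nat.cast_nonneg k : (0:ℝ) ≤ k)]

open Classical in
noncomputable def dd (k : ℕ) : (Fin (k+3) → XX k) → ℝ := fun s =>
  if Function.Injective s then
    if Function.Injective (fun i => (qq k (s i)).1) then
      (if ∀ i, (qq k (s i)).2 = 0 then MM k else 1)
    else hh k
  else 0

lemma dd_nonneg (s : Fin (k+3) → XX k) : 0 ≤ dd k s := by
  unfold dd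
  split_ifs
  · linarith [one_le_MM (k := k)]
  · norm_num
  · linarith [one_le_hh (k := k)]
  · norm_num

end Metric

section Metric2
variable {k : ℕ}

lemma dd_eq_zero {s : Fin (k+3) → XX k} (hs : ¬ Function.Injective s) : dd k s = 0 := by
  unfold dd
  rw [if_neg hs]

lemma dd_perm (π : Equiv.Perm (Fin (k+3))) (s : Fin (k+3) → XX k) :
    dd k (s ∘ π) = dd k s := by
  have h1 : Function.Injective (s ∘ π) ↔ Function.Injective s :=
    Equiv.injective_comp π s
  have h2 : Function.Injective (fun i => (qq k ((s ∘ π) i)).1)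
      ↔ Function.Injective (fun i => (qq k (s i)).1) :=
    Equiv.injective_comp π fun i => (qq k (s i)).1
  have h3 : (∀ i, (qq k ((s ∘ π) i)).2 = 0) ↔ (∀ i, (qq k (s i)).2 = 0) :=
    ⟨fun h i => by have := h (π.symm i); simpa using this, fun h i => h (π i)⟩
  unfold dd
  simp only [h1, h2, h3]

lemma dd_tt : dd k (tt k) = MM k := by
  unfold dd
  rw [if_pos tt_inj, if_pos, if_pos]
  · intro i
    show ((qq k) ((qq k).symm (i, 0))).2 = 0
    rw [Equiv.apply_symm_apply]
  · intro a b hab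
    have : ((qq k) ((qq k).symm (a, 0))).1 = ((qq k) ((qq k).symm (b, 0))).1 := hab
    rwa [Equiv.apply_symm_apply, Equiv.apply_symm_apply] at this

lemma update_inj {s : Fin (k+3) → XX k} (hs : Function.Injective s) {y : XX k}
    (hy : ∀ j, s j ≠ y) (i : Fin (k+3)) : Function.Injective (Function.update s i y) := by
  intro a b hab
  by_cases ha : a = i <;> by_cases hb : b = i
  · rw [ha, hb]
  · rw [ha, Function.update_self, Function.update_of_ne hb] at hab
    exact absurd hab.symm (hy b)
  · rw [hb, Function.update_self, Function.update_of_ne ha] at hab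
    exact absurd hab (hy a)
  · rw [Function.update_of_ne ha, Function.update_of_ne hb] at hab
    exact hs hab

lemma cls_update (s : Fin (k+3) → XX k) (i : Fin (k+3)) (y : XX k) :
    (fun j => (qq k ((Function.update s i y) j)).1)
      = Function.update (fun j => (qq k (s j)).1) i (qq k y).1 := by
  funext j
  by_cases h : j = i
  · subst h
    rw [Function.update_self, Function.update_self]
  · rw [Function.update_of_ne h, Function.update_of_ne h]

lemma sum_ite_cls (a : Fin (k+3)) :
    ∑ c : Fin (k+3), (if c = a then (1:ℝ) else hh k) = MM k := by
  have : ∀ c : Fin (k+3), (if c = a then (1:ℝ) else hh k)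
      = hh k + (if c = a then 1 - hh k else 0) := by
    intro c; split_ifs <;> ring
  rw [Finset.sum_congr rfl fun c _ => this c, Finset.sum_add_distrib, Finset.sum_const,
    Finset.sum_ite_eq' Finset.univ a (fun _ => (1:ℝ) - hh k)]
  simp only [Finset.card_univ, Fintype.card_fin, Finset.mem_univ, if_pos, nsmul_eq_mul]
  unfold hh MM
  push_cast
  ring

lemma dd_simplex (s : Fin (k+3) → XX k) (y : XX k) :
    dd k s ≤ ∑ i : Fin (k+3), dd k (Function.update s i y) := by
  by_cases hinj : Function.Injective s
  · by_cases hy : ∃ j, s j = y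
    · obtain ⟨j, hj⟩ := hy
      have : dd k s = dd k (Function.update s j y) := by
        rw [← hj, Function.update_eq_self]
      rw [this]
      exact Finset.single_le_sum (f := fun i => dd k (Function.update s i y))
        (fun i _ => dd_nonneg _) (Finset.mem_univ j)
    · push_neg at hy
      have hupd : ∀ i, Function.Injective (Function.update s i y) := update_inj hinj hy
      by_cases hcls : Function.Injective (fun i => (qq k (s i)).1)
      · have hbij : Function.Bijective (fun i => (qq k (s i)).1) :=
          Finite.injective_iff_bijective.mp hcls
        by_cases hT : ∀ i, (qq k (s i)).2 = 0
        · -- T0 case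
          have key : ∀ i, (if (qq k (s i)).1 = (qq k y).1 then (1:ℝ) else hh k)
              ≤ dd k (Function.update s i y) := by
            intro i
            by_cases h : (qq k (s i)).1 = (qq k y).1
            · rw [if_pos h]
              have hcu : (fun j => (qq k ((Function.update s i y) j)).1)
                  = fun j => (qq k (s j)).1 := by
                rw [cls_update, ← h, Function.update_eq_self]
              unfold dd
              rw [if_pos (hupd i), if_pos (by rw [hcu]; exact hcls)]
              split_ifs
              · exact one_le_MM
              · exact le_refl 1
            · rw [if_neg h]
              obtain ⟨i', hi'⟩ := hbij.2 (qq k y).1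
              have hi2 : ((qq k) (s i')).1 = ((qq k) y).1 := hi'
              have hii : i' ≠ i := fun he => h (by rw [← he, hi2])
              have hni : ¬ Function.Injective (fun j => (qq k ((Function.update s i y) j)).1) := by
                rw [cls_update]
                intro H
                apply hii
                apply H
                show Function.update (fun j => (qq k (s j)).1) i (qq k y).1 i'
                  = Function.update (fun j => (qq k (s j)).1) i (qq k y).1 i
                rw [Function.update_of_ne hii, Function.update_self, hi2]
              unfold dd
              rw [if_pos (hupd i), if_neg hni]
          have hdd : dd k s = MM k := by
            unfold dd
            rw [if_pos hinj, if_pos hcls, if_pos hT]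
          rw [hdd]
          calc MM k = ∑ c : Fin (k+3), (if c = (qq k y).1 then (1:ℝ) else hh k) :=
                (sum_ite_cls _).symm
            _ = ∑ i : Fin (k+3), (if (qq k (s i)).1 = (qq k y).1 then (1:ℝ) else hh k) :=
                (Fintype.sum_bijective _ hbij _ _ fun i => rfl).symm
            _ ≤ ∑ i : Fin (k+3), dd k (Function.update s i y) :=
                Finset.sum_le_sum fun i _ => key i
        · -- non-T0 transversal
          have hdd : dd k s = 1 := by
            unfold dd
            rw [if_pos hinj, if_pos hcls, if_neg hT]
          obtain ⟨i0, hi0⟩ := hbij.2 (qq k y).1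
          have hcu : (fun j => (qq k ((Function.update s i0 y) j)).1)
              = fun j => (qq k (s j)).1 := by
            rw [cls_update, ← hi0, Function.update_eq_self]
          have h1 : (1:ℝ) ≤ dd k (Function.update s i0 y) := by
            unfold dd
            rw [if_pos (hupd i0), if_pos (by rw [hcu]; exact hcls)]
            split_ifs
            · exact one_le_MM
            · exact le_refl 1
          rw [hdd]
          exact h1.trans (Finset.single_le_sum (f := fun i => dd k (Function.update s i y))
            (fun i _ => dd_nonneg _) (Finset.mem_univ i0))
      · -- pair case
        have hdd : dd k s = hh k := by
          unfold dd
          rw [if_pos hinj, if_neg hcls]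
        rw [Function.not_injective_iff] at hcls
        obtain ⟨a, b, hab, hne⟩ := hcls
        have hex : ∃ p : Fin (k+3), p ∉ ({a, b} : Finset (Fin (k+3))) := by
          by_contra hcon
          push_neg at hcon
          have hsub : (Finset.univ : Finset (Fin (k+3))) ⊆ {a, b} := fun p _ => hcon p
          have := Finset.card_le_card hsub
          have h2 : ({a, b} : Finset (Fin (k+3))).card ≤ 2 :=
            (Finset.card_insert_le _ _).trans (by simp)
          simp [Fintype.card_fin] at this
          omega
        obtain ⟨p, hp⟩ := hex
        simp only [Finset.mem_insert, Finset.mem_singleton, not_or] at hp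
        have hni : ¬ Function.Injective (fun j => (qq k ((Function.update s p y) j)).1) := by
          intro H
          apply hne
          apply H
          show (qq k (Function.update s p y a)).1 = (qq k (Function.update s p y b)).1
          rw [Function.update_of_ne (fun h => hp.1 h.symm) ,
            Function.update_of_ne (fun h => hp.2 h.symm)]
          exact hab
        have h1 : dd k (Function.update s p y) = hh k := by
          unfold dd
          rw [if_pos (hupd p), if_neg hni]
        rw [hdd, ← h1]
        exact Finset.single_le_sum (f := fun i => dd k (Function.update s i y))
          (fun i _ => dd_nonneg _) (Finset.mem_univ p)
  · rw [dd_eq_zero hinj]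
    exact Finset.sum_nonneg fun i _ => dd_nonneg _

lemma isPseudoMetric_dd : IsPseudoMetric (k+3) (dd k) :=
  ⟨dd_nonneg, fun _ => dd_eq_zero, dd_perm, dd_simplex⟩

end Metric2

section Final
variable {k : ℕ}

lemma abs_det_le {n : ℕ} (M : Matrix (Fin n) (Fin n) ℝ) :
    |M.det| ≤ ∑ σ : Equiv.Perm (Fin n), ∏ i, |M (σ i) i| := by
  rw [Matrix.det_apply]
  refine (Finset.abs_sum_le_sum_abs _ _).trans ?_
  refine Finset.sum_le_sum fun σ _ => ?_
  rw [Units.smul_def, zsmul_eq_mul, abs_mul, Finset.abs_prod]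
  rcases Int.units_eq_one_or (Equiv.Perm.sign σ) with h | h <;> rw [h] <;> simp

lemma sum_abs_W_le :
    ∑ s : Fin (k+3) → XX k, |W k s| ≤ ((k+3).factorial : ℝ) * 2^(k+3) := by
  have h1 : ∀ s : Fin (k+3) → XX k,
      |W k s| ≤ ∑ σ : Equiv.Perm (Fin (k+3)), ∏ i, |vv k i (s (σ i))| := by
    intro s
    exact abs_det_le (Wm k s)
  calc ∑ s : Fin (k+3) → XX k, |W k s|
      ≤ ∑ s : Fin (k+3) → XX k, ∑ σ : Equiv.Perm (Fin (k+3)), ∏ i, |vv k i (s (σ i))| :=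
        Finset.sum_le_sum fun s _ => h1 s
    _ = ∑ σ : Equiv.Perm (Fin (k+3)), ∑ s : Fin (k+3) → XX k, ∏ i, |vv k i (s (σ i))| :=
        Finset.sum_comm
    _ = ∑ σ : Equiv.Perm (Fin (k+3)), ∑ s : Fin (k+3) → XX k, ∏ i, |vv k i (s i)| := by
        refine Finset.sum_congr rfl fun σ _ => ?_
        refine Fintype.sum_equiv (Equiv.arrowCongr σ.symm (Equiv.refl (XX k))) _ _ fun s => ?_
        refine Finset.prod_congr rfl fun i _ => ?_
        simp [Equiv.arrowCongr_apply]
    _ = ∑ σ : Equiv.Perm (Fin (k+3)), ∏ i : Fin (k+3), ∑ x : XX k, |vv k i x| := by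
        refine Finset.sum_congr rfl fun σ _ => ?_
        rw [Finset.prod_univ_sum]
        rw [Fintype.piFinset_univ]
    _ = ∑ σ : Equiv.Perm (Fin (k+3)), (2:ℝ)^(k+3) := by
        refine Finset.sum_congr rfl fun σ _ => ?_
        rw [Finset.prod_congr rfl fun i _ => sum_abs_vv i]
        simp
    _ = ((k+3).factorial : ℝ) * 2^(k+3) := by
        rw [Finset.sum_const, Finset.card_univ, Fintype.card_perm, Fintype.card_fin,
          nsmul_eq_mul]

lemma pointwise_bound (s : Fin (k+3) → XX k) :
    |unitChain (tt k) s - W k s| * dd k s ≤ |W k s| := by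
  by_cases hπ : ∃ π : Equiv.Perm (Fin (k+3)), s = tt k ∘ π
  · obtain ⟨π, rfl⟩ := hπ
    rw [unitChain_comp _ tt_inj, W_comp_perm, W_tt, mul_one, sub_self, abs_zero, zero_mul]
    exact abs_nonneg _
  · push_neg at hπ
    rw [unitChain_eq_zero _ hπ, zero_sub, abs_neg]
    by_cases hW : W k s = 0
    · rw [hW, abs_zero, zero_mul]
    · have hinj : Function.Injective s := by
        by_contra h; exact hW (W_eq_zero_of_not_inj h)
      have hcls : Function.Injective (fun i => (qq k (s i)).1) := by
        by_contra h; exact hW (W_eq_zero_of_not_cls_inj h)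
      have hT : ¬ ∀ i, (qq k (s i)).2 = 0 := by
        intro hT
        apply hπ (Equiv.ofBijective _ (Finite.injective_iff_bijective.mp hcls))
        funext i
        rw [Function.comp_apply, Equiv.ofBijective_apply]
        show s i = tt k ((qq k (s i)).1)
        unfold tt
        have hqi : qq k (s i) = ((qq k (s i)).1, (0 : Fin 2)) := by
          rw [← hT i]
        rw [← hqi, Equiv.symm_apply_apply]
      have hdd : dd k s = 1 := by
        unfold dd
        rw [if_pos hinj, if_pos hcls, if_neg hT]
      rw [hdd, mul_one]


/-- for every `k ≥ 3` (arity `k + 3` for `k : ℕ`), there exists a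
finite pseudo metric space of that arity that is not a strong pseudo metric
space. -/
theorem stmt_10 (k : ℕ) :
    ∃ (n : ℕ) (d : (Fin (k + 3) → Fin n) → ℝ),
      IsPseudoMetric (k + 3) d ∧ ¬ IsStrongPseudoMetric (k + 2) d := by
  refine ⟨(k+3)*2, dd k, isPseudoMetric_dd, ?_⟩
  intro hS
  have halt : AltChain (fun s => unitChain (tt k) s - W k s) := by
    intro π s
    show unitChain (tt k) (s ∘ π) - W k (s ∘ π) = _
    rw [altChain_unitChain (tt k) π s, W_comp_perm]
    ring
  have hb : bdry (fun s => unitChain (tt k) s - W k s) = bdry (unitChain (tt k)) := by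
    funext y
    unfold bdry
    rw [Finset.sum_sub_distrib, bdry_W_zero y, sub_zero]
  have H := hS.strong_simplex (tt k) tt_inj _ halt hb
  have H2 : ∑ s : Fin (k+3) → XX k, |unitChain (tt k) s - W k s| * dd k s
      ≤ ((k+3).factorial : ℝ) * 2^(k+3) :=
    (Finset.sum_le_sum fun s _ => pointwise_bound s).trans sum_abs_W_le
  rw [dd_tt] at H
  have hfac : (0:ℝ) < ((k+3).factorial : ℝ) := by
    exact_mod_cast Nat.factorial_pos (k+3)
  have hMM : (2:ℝ)^(k+3) < MM k := by
    unfold MM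
    nlinarith [pow_pos (show (0:ℝ) < 2 by norm_num) (k+3), (Nat.cast_nonneg k : (0:ℝ) ≤ k)]
  have hlt := mul_lt_mul_of_pos_left hMM hfac
  have hfacs : (((k+2)+1).factorial : ℝ) = ((k+3).factorial : ℝ) := by norm_num
  rw [hfacs] at H
  linarith
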